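/- Every binary compressed tree-sibling phylogenetic network is stable, i.e., F(U(N)) is isomorphic to N. -/

import Mathlib

/-! Basic framework: labelled rooted directed multigraphs, phylogenetic
networks, (pseudo) MUL-trees, unfolding, folding maps, etc. -/

structure Dgr (X : Type) : Type 1 where
  V : Type
  A : Type
  tl : A → V
  hd : A → V
  root : V
  lab : V → Option X

namespace Dgr

variable {X : Type}

/-- There is an arc from `u` to `v`. -/
def arcRel (G : Dgr X) (u v : G.V) : Prop := ∃ a : G.A, G.tl a = u ∧ G.hd a = v

/-- `v` is reachable from `u` by a directed path (possibly trivial);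
equivalently, `v` is below `u` or equal to it. -/
def Reaches (G : Dgr X) : G.V → G.V → Prop := Relation.ReflTransGen G.arcRel

noncomputable def indeg (G : Dgr X) (v : G.V) : ℕ := Nat.card {a : G.A // G.hd a = v}
noncomputable def outdeg (G : Dgr X) (v : G.V) : ℕ := Nat.card {a : G.A // G.tl a = v}

def IsLeaf (G : Dgr X) (v : G.V) : Prop := G.outdeg v = 0

def Acyclic (G : Dgr X) : Prop := ∀ v, ¬ Relation.TransGen G.arcRel v v

/-- A finite rooted DAG: acyclic, the root has in-degree zero and every
vertex is reachable from the root. -/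
def IsRootedDAG (G : Dgr X) : Prop :=
  Finite G.V ∧ Finite G.A ∧ G.Acyclic ∧ G.indeg G.root = 0 ∧ ∀ v, G.Reaches G.root v

/-- A tree vertex: in-degree one, out-degree zero (a leaf) or at least two. -/
def IsTreeVertex (G : Dgr X) (v : G.V) : Prop :=
  G.indeg v = 1 ∧ (G.outdeg v = 0 ∨ 2 ≤ G.outdeg v)

/-- A reticulation vertex: out-degree one and in-degree at least two. -/
def IsRetVertex (G : Dgr X) (v : G.V) : Prop := G.outdeg v = 1 ∧ 2 ≤ G.indeg v

/-- An `X`-network: rooted DAG (multi-arcs allowed), root of out-degree ≥ 2,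
every non-root vertex a tree vertex or a reticulation vertex, and the leaves
are labelled bijectively by `X`. -/
def IsXNetwork (G : Dgr X) : Prop :=
  G.IsRootedDAG ∧ 2 ≤ G.outdeg G.root ∧
  (∀ v, v ≠ G.root → G.IsTreeVertex v ∨ G.IsRetVertex v) ∧
  (∀ v, (∃ x, G.lab v = some x) ↔ G.IsLeaf v) ∧
  (∀ x : X, ∃! v, G.lab v = some x)

def NoMultiArcs (G : Dgr X) : Prop :=
  ∀ a b : G.A, G.tl a = G.tl b → G.hd a = G.hd b → a = b

/-- A phylogenetic network on `X`: an `X`-network without multi-arcs. -/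
def IsPhyloNetwork (G : Dgr X) : Prop := G.IsXNetwork ∧ G.NoMultiArcs

/-- A phylogenetic tree on `X`: a phylogenetic network with no reticulations. -/
def IsPhyloTree (G : Dgr X) : Prop := G.IsPhyloNetwork ∧ ∀ v, ¬ G.IsRetVertex v

/-- A pseudo MUL-tree on `X`: a finite rooted tree whose leaves are labelled
by elements of `X` (several leaves may share a label, every element of `X`
is used, and exactly the leaves are labelled). -/
def IsPMulTree (G : Dgr X) : Prop :=
  G.IsRootedDAG ∧ (∀ v, v ≠ G.root → G.indeg v = 1) ∧
  (∀ v, (∃ x, G.lab v = some x) ↔ G.IsLeaf v) ∧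
  (∀ x : X, ∃ v, G.lab v = some x)

/-- A MUL-tree: a pseudo MUL-tree with no in-degree-one out-degree-one vertex. -/
def IsMulTree (G : Dgr X) : Prop :=
  G.IsPMulTree ∧ ∀ v, ¬ (G.indeg v = 1 ∧ G.outdeg v = 1)

/-- Isomorphism of labelled rooted directed multigraphs. -/
def Iso (G H : Dgr X) : Prop :=
  ∃ (φ : G.V ≃ H.V) (ψ : G.A ≃ H.A),
    (∀ a, H.tl (ψ a) = φ (G.tl a)) ∧ (∀ a, H.hd (ψ a) = φ (G.hd a)) ∧
    φ G.root = H.root ∧ (∀ v, H.lab (φ v) = G.lab v)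

/-- The pendant subgraph rooted at `v` (everything below or equal to `v`). -/
def pendant (G : Dgr X) (v : G.V) : Dgr X where
  V := {w : G.V // G.Reaches v w}
  A := {a : G.A // G.Reaches v (G.tl a)}
  tl a := ⟨G.tl a.1, a.2⟩
  hd a := ⟨G.hd a.1, a.2.tail ⟨a.1, rfl, rfl⟩⟩
  root := ⟨v, Relation.ReflTransGen.refl⟩
  lab w := G.lab w.1

/-- Directed paths in `G` starting at the root, ending at the index vertex. -/
inductive RPath (G : Dgr X) : G.V → Type
  | nil : RPath G G.root
  | cons {v : G.V} (p : RPath G v) (a : G.A) (h : G.tl a = v) : RPath G (G.hd a)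

/-- The path-tree `U*(G)`: vertices are directed root-paths of `G`, arcs are
one-arc extensions, the label of a path is the label of its last vertex. -/
def Ustar (G : Dgr X) : Dgr X where
  V := Σ v : G.V, RPath G v
  A := Σ v : G.V, RPath G v × {a : G.A // G.tl a = v}
  tl x := ⟨x.1, x.2.1⟩
  hd x := ⟨G.hd x.2.2.1, RPath.cons x.2.1 x.2.2.1 x.2.2.2⟩
  root := ⟨G.root, RPath.nil⟩
  lab x := G.lab x.1

/-- Vertices kept by the suppression operation (the root is always kept). -/
def Keep (G : Dgr X) (v : G.V) : Prop :=
  v = G.root ∨ ¬ (G.indeg v = 1 ∧ G.outdeg v = 1)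

def startV (G : Dgr X) (l : List G.A) : G.V :=
  match l.head? with
  | some a => G.tl a
  | none => G.root

def endV (G : Dgr X) (l : List G.A) : G.V :=
  match l.getLast? with
  | some a => G.hd a
  | none => G.root

/-- `l` is a composable sequence of arcs. -/
def IsChain (G : Dgr X) (l : List G.A) : Prop :=
  ∀ p a b s, l = p ++ a :: b :: s → G.hd a = G.tl b

/-- An arc of the suppression: a nonempty directed path between kept vertices
all of whose intermediate vertices are suppressed. -/
def IsSuppArc (G : Dgr X) (l : List G.A) : Prop :=
  l ≠ [] ∧ G.IsChain l ∧ G.Keep (G.startV l) ∧ G.Keep (G.endV l) ∧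
  ∀ p a s, l = p ++ a :: s → s ≠ [] → ¬ G.Keep (G.hd a)

/-- Suppression of all in-degree-one out-degree-one vertices. -/
def suppress (G : Dgr X) : Dgr X where
  V := {v : G.V // G.Keep v}
  A := {l : List G.A // G.IsSuppArc l}
  tl l := ⟨G.startV l.1, l.2.2.2.1⟩
  hd l := ⟨G.endV l.1, l.2.2.2.2.1⟩
  root := ⟨G.root, Or.inl rfl⟩
  lab v := G.lab v.1

/-- The unfolding `U(G)`: the path-tree with in-degree-one out-degree-one
vertices suppressed. -/
def U (G : Dgr X) : Dgr X := G.Ustar.suppress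

/-- An `X`-morphism: maps on vertices and arcs commuting with heads and tails
and preserving the leaf-labelling by `X`. -/
structure Mor (G H : Dgr X) where
  fV : G.V → H.V
  fA : G.A → H.A
  tl_comm : ∀ a, H.tl (fA a) = fV (G.tl a)
  hd_comm : ∀ a, H.hd (fA a) = fV (G.hd a)
  lab_pres : ∀ v x, G.lab v = some x → H.lab (fV v) = some x

def Mor.IsRooted {G H : Dgr X} (f : Mor G H) : Prop := f.fV G.root = H.root

/-- A folding map: a surjective `X`-morphism with the unique arc-lifting
property. -/
def Mor.IsFolding {G H : Dgr X} (f : Mor G H) : Prop :=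
  Function.Surjective f.fV ∧ Function.Surjective f.fA ∧
  ∀ (a : H.A) (v : G.V), f.fV v = H.tl a →
    ∃! b : G.A, G.tl b = v ∧ f.fA b = a

/-- The canonical map `U*(G) → G` sending a root-path to its last vertex. -/
def fstar (G : Dgr X) : Mor G.Ustar G where
  fV x := x.1
  fA x := x.2.2.1
  tl_comm a := a.2.2.2
  hd_comm _ := rfl
  lab_pres _ _ h := h

/-- `v` is an interior vertex of the arc-sequence `l`. -/
def IsInteriorOf (G : Dgr X) (l : List G.A) (v : G.V) : Prop :=
  ∃ p a s, l = p ++ a :: s ∧ s ≠ [] ∧ G.hd a = v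

/-- `G'` is a subdivision of `G`. -/
def IsSubdivisionOf (G' G : Dgr X) : Prop :=
  ∃ (φ : G.V → G'.V) (ψ : G.A → List G'.A),
    Function.Injective φ ∧ φ G.root = G'.root ∧
    (∀ v, G'.lab (φ v) = G.lab v) ∧
    (∀ a, ψ a ≠ [] ∧ G'.IsChain (ψ a) ∧ G'.startV (ψ a) = φ (G.tl a) ∧
      G'.endV (ψ a) = φ (G.hd a) ∧
      ∀ v, G'.IsInteriorOf (ψ a) v → v ∉ Set.range φ) ∧
    (∀ v' : G'.V, v' ∉ Set.range φ →
      G'.indeg v' = 1 ∧ G'.outdeg v' = 1 ∧ G'.lab v' = none) ∧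
    (∀ a' : G'.A, ∃! a : G.A, a' ∈ ψ a)

/-- `H` is (isomorphic to) a subgraph of `G`. -/
def IsSubgraphOf (H G : Dgr X) : Prop :=
  ∃ (φ : H.V → G.V) (ψ : H.A → G.A),
    Function.Injective φ ∧ Function.Injective ψ ∧
    (∀ a, G.tl (ψ a) = φ (H.tl a)) ∧ (∀ a, G.hd (ψ a) = φ (H.hd a)) ∧
    (∀ v, H.lab v = G.lab (φ v))

/-- `G` displays `T`: some subgraph of `G` is a subdivision of `T`. -/
def Displays (G T : Dgr X) : Prop :=
  ∃ H : Dgr X, IsSubgraphOf H G ∧ IsSubdivisionOf H T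

/-- `T` is weakly displayed by `G`: `T` is displayed by the unfolding `U(G)`. -/
def WeaklyDisplays (G T : Dgr X) : Prop := Displays G.U T

/-- `N` is (isomorphic to) the folding `F(T)` of the MUL-tree `T`: `N` is an
`X`-network obtained as the quotient of a subdivision `T'` of `T` by the
relation identifying vertices with isomorphic pendant subtrees, the quotient
map being a folding map whose fibres are exactly the classes of that relation. -/
def IsFoldingOf (N T : Dgr X) : Prop :=
  N.IsXNetwork ∧ ∃ T' : Dgr X, IsSubdivisionOf T' T ∧
    ∃ f : Mor T' N, f.IsFolding ∧
      ∀ u v : T'.V, f.fV u = f.fV v ↔ Iso (T'.pendant u) (T'.pendant v)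

/-- `N` is stable: `F(U(N))` is isomorphic to `N`. -/
def Stable (N : Dgr X) : Prop :=
  ∃ N' : Dgr X, IsFoldingOf N' N.U ∧ Iso N' N

/-- `T'` is the guide tree `T†` of the folding operation applied to `T`:
a subdivision of `T` whose quotient by the isomorphic-pendant-subtree
relation is an `X`-network via a folding map. -/
def IsDaggerOf (T' T : Dgr X) : Prop :=
  IsSubdivisionOf T' T ∧ ∃ (N : Dgr X) (f : Mor T' N), N.IsXNetwork ∧
    f.IsFolding ∧
    ∀ u v : T'.V, f.fV u = f.fV v ↔ Iso (T'.pendant u) (T'.pendant v)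

/-- The child of every reticulation vertex is a tree vertex. -/
def Compressed (N : Dgr X) : Prop :=
  ∀ a : N.A, N.IsRetVertex (N.tl a) → N.IsTreeVertex (N.hd a)

/-- Every (non-leaf) tree vertex has out-degree two. -/
def SemiResolved (N : Dgr X) : Prop :=
  ∀ v, N.indeg v = 1 → N.outdeg v = 0 ∨ N.outdeg v = 2

/-- Binary phylogenetic network. -/
def BinaryNet (N : Dgr X) : Prop :=
  N.outdeg N.root = 2 ∧ ∀ v, v ≠ N.root →
    (N.IsRetVertex v → N.indeg v = 2) ∧
    (N.indeg v = 1 → N.outdeg v = 0 ∨ N.outdeg v = 2)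

/-- Binary tree: every vertex has out-degree zero or two. -/
def BinaryTree (T : Dgr X) : Prop := ∀ v, T.outdeg v = 0 ∨ T.outdeg v = 2

/-- The set of children of a vertex. -/
def children (N : Dgr X) (v : N.V) : Set N.V := {w | ∃ a, N.tl a = v ∧ N.hd a = w}

/-- Tree-sibling network: every reticulation vertex has a sibling that is a
tree vertex. -/
def TreeSibling (N : Dgr X) : Prop :=
  ∀ v, N.IsRetVertex v → ∃ w, w ≠ v ∧ N.IsTreeVertex w ∧
    ∃ a b : N.A, N.tl a = N.tl b ∧ N.hd a = v ∧ N.hd b = w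

/-- The final vertex in `N` of (the path underlying) a vertex of `U(N)`. -/
def endOf (N : Dgr X) (p : N.U.V) : N.V := p.1.1

/-- Identifiable pair of tree vertices. -/
def Identifiable (N : Dgr X) (v w : N.V) : Prop :=
  v ≠ w ∧ N.IsTreeVertex v ∧ N.IsTreeVertex w ∧
  ∃ p q : N.U.V, N.endOf p = v ∧ N.endOf q = w ∧
    Iso (N.U.pendant p) (N.U.pendant q)

/-- Irreducible network: no identifiable pair of tree vertices. -/
def Irreducible (N : Dgr X) : Prop := ¬ ∃ v w, N.Identifiable v w

/-- The pendant subtree at `v` is inextendible: some other vertex carries an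
isomorphic pendant subtree. -/
def Inextendible (T : Dgr X) (v : T.V) : Prop :=
  ∃ v', v' ≠ v ∧ Iso (T.pendant v) (T.pendant v')

/-- A reconciliation map between a tree `T` and a network `N`. -/
structure Recon (T N : Dgr X) where
  r : T.V → N.V
  P : T.A → List N.A
  tree_or_root : ∀ v, r v = N.root ∨ N.IsTreeVertex (r v)
  leaf_fix : ∀ v x, T.lab v = some x → N.lab (r v) = some x
  chain : ∀ a, N.IsChain (P a)
  trivialP : ∀ a, P a = [] → r (T.tl a) = r (T.hd a)
  startP : ∀ a, P a ≠ [] → N.startV (P a) = r (T.tl a)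
  endP : ∀ a, P a ≠ [] → N.endV (P a) = r (T.hd a)

/-- Locally separated reconciliation: for any two distinct arcs of `T` with
the same tail, both associated paths are nonempty and have distinct initial
arcs. -/
def Recon.LocSep {T N : Dgr X} (ρ : Recon T N) : Prop :=
  ∀ a b : T.A, a ≠ b → T.tl a = T.tl b →
    ρ.P a ≠ [] ∧ ρ.P b ≠ [] ∧ (ρ.P a).head? ≠ (ρ.P b).head?

/-- The pendant subnetwork `N(u)`: restrict below `u` and suppress. -/
def Nsub (N : Dgr X) (u : N.V) : Dgr X := (N.pendant u).suppress

/-- The function `τ` of the dynamic program (as a proposition, `τ(v,u)=1`). -/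
def tau (T N : Dgr X) (v : T.V) (u : N.V) : Prop :=
  (T.IsLeaf v → ∀ x, T.lab v = some x →
     ∃ u' : N.V, N.lab u' = some x ∧ N.Reaches u u') ∧
  (¬ T.IsLeaf v → ∃ u' : N.V, (u' = N.root ∨ N.IsTreeVertex u') ∧
     N.Reaches u u' ∧ ∃ ρ : Recon (T.pendant v) (N.Nsub u'), ρ.LocSep)

/-- The result of `HangLeaves(v)` on the network `N` (new leaves are labelled
by the two new elements of `X ⊕ Fin 2`); vertices `inr 0, 1, 2, 3, 4` are
`x_v, x'_v, p_v, q_v, ρ_v` respectively. -/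
def HangN (N : Dgr X) (v : N.V) : Dgr (X ⊕ Fin 2) where
  V := N.V ⊕ Fin 5
  A := N.A ⊕ Fin 6
  tl := Sum.elim (fun a => Sum.inl (N.tl a))
    ![Sum.inr 4, Sum.inr 4, Sum.inr 2, Sum.inl v, Sum.inr 2, Sum.inr 3]
  hd := Sum.elim (fun a => Sum.inl (N.hd a))
    ![Sum.inl N.root, Sum.inr 2, Sum.inr 3, Sum.inr 3, Sum.inr 1, Sum.inr 0]
  root := Sum.inr 4
  lab := Sum.elim (fun w => (N.lab w).map Sum.inl)
    ![some (Sum.inr 0), some (Sum.inr 1), none, none, none]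

/-- The result of `HangLeaves` on the tree `T`; vertices `inr 0, 1, 2, 3` are
`x_v, x'_v, p_v, ρ_v` respectively. -/
def HangT (T : Dgr X) : Dgr (X ⊕ Fin 2) where
  V := T.V ⊕ Fin 4
  A := T.A ⊕ Fin 4
  tl := Sum.elim (fun a => Sum.inl (T.tl a))
    ![Sum.inr 3, Sum.inr 3, Sum.inr 2, Sum.inr 2]
  hd := Sum.elim (fun a => Sum.inl (T.hd a))
    ![Sum.inl T.root, Sum.inr 2, Sum.inr 0, Sum.inr 1]
  root := Sum.inr 3
  lab := Sum.elim (fun w => (T.lab w).map Sum.inl)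
    ![some (Sum.inr 0), some (Sum.inr 1), none, none]

end Dgr


namespace Dgr
variable {X : Type}

theorem Iso.refl (G : Dgr X) : Iso G G :=
  ⟨Equiv.refl _, Equiv.refl _, fun _ => rfl, fun _ => rfl, rfl, fun _ => rfl⟩

theorem Iso.symm {G H : Dgr X} (h : Iso G H) : Iso H G := by
  obtain ⟨φ, ψ, htl, hhd, hr, hl⟩ := h
  refine ⟨φ.symm, ψ.symm, ?_, ?_, ?_, ?_⟩
  · intro a; apply φ.injective
    rw [Equiv.apply_symm_apply, ← htl, Equiv.apply_symm_apply]
  · intro a; apply φ.injective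
    rw [Equiv.apply_symm_apply, ← hhd, Equiv.apply_symm_apply]
  · apply φ.injective; rw [Equiv.apply_symm_apply, hr]
  · intro v; rw [← hl, Equiv.apply_symm_apply]

theorem Iso.trans {G H K : Dgr X} (h1 : Iso G H) (h2 : Iso H K) : Iso G K := by
  obtain ⟨φ1, ψ1, htl1, hhd1, hr1, hl1⟩ := h1
  obtain ⟨φ2, ψ2, htl2, hhd2, hr2, hl2⟩ := h2
  exact ⟨φ1.trans φ2, ψ1.trans ψ2, fun a => by simp [htl2, htl1], fun a => by simp [hhd2, hhd1],
    by simp [hr1, hr2], fun v => by simp [hl2, hl1]⟩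

theorem reaches_pendant_iff (G : Dgr X) (v : G.V) (x y : (G.pendant v).V) :
    (G.pendant v).Reaches x y ↔ G.Reaches x.1 y.1 := by
  constructor
  · intro h
    induction h with
    | refl => exact Relation.ReflTransGen.refl
    | tail h step ih =>
      obtain ⟨a, ha, hb⟩ := step
      exact ih.tail ⟨a.1, congrArg Subtype.val ha, congrArg Subtype.val hb⟩
  · intro h
    have key : ∀ z (hz : G.Reaches x.1 z), (G.pendant v).Reaches x ⟨z, x.2.trans hz⟩ := by
      intro z hz
      induction hz with
      | refl => exact Relation.ReflTransGen.refl
      | @tail b c hb step ih =>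
        obtain ⟨a, ha, hc2⟩ := step
        exact ih.tail ⟨⟨a, ha ▸ (x.2.trans hb)⟩, Subtype.ext ha, Subtype.ext hc2⟩
    exact key y.1 h

theorem iso_pendant_pendant (G : Dgr X) (v : G.V) (x : (G.pendant v).V) :
    Iso ((G.pendant v).pendant x) (G.pendant x.1) := by
  refine ⟨⟨fun y => ⟨y.1.1, (reaches_pendant_iff G v x y.1).mp y.2⟩,
      fun z => ⟨⟨z.1, x.2.trans z.2⟩, (reaches_pendant_iff G v x _).mpr z.2⟩,
      fun y => Subtype.ext (Subtype.ext rfl), fun z => Subtype.ext rfl⟩,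
    ⟨fun A => ⟨A.1.1, (reaches_pendant_iff G v x _).mp A.2⟩,
      fun a => ⟨⟨a.1, x.2.trans a.2⟩, (reaches_pendant_iff G v x _).mpr a.2⟩,
      fun A => Subtype.ext (Subtype.ext rfl), fun a => Subtype.ext rfl⟩,
    fun a => Subtype.ext rfl, fun a => Subtype.ext rfl, Subtype.ext rfl, fun y => rfl⟩

theorem reaches_map {G H : Dgr X} (φ : G.V ≃ H.V) (ψ : G.A ≃ H.A)
    (htl : ∀ a, H.tl (ψ a) = φ (G.tl a)) (hhd : ∀ a, H.hd (ψ a) = φ (G.hd a))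
    {a b : G.V} (h : G.Reaches a b) : H.Reaches (φ a) (φ b) := by
  induction h with
  | refl => exact Relation.ReflTransGen.refl
  | tail h step ih =>
    obtain ⟨c, hc1, hc2⟩ := step
    exact ih.tail ⟨ψ c, by rw [htl, hc1], by rw [hhd, hc2]⟩

theorem iso_pendant_congr {G H : Dgr X} (φ : G.V ≃ H.V) (ψ : G.A ≃ H.A)
    (htl : ∀ a, H.tl (ψ a) = φ (G.tl a)) (hhd : ∀ a, H.hd (ψ a) = φ (G.hd a))
    (hlab : ∀ v, H.lab (φ v) = G.lab v) (u : G.V) :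
    Iso (G.pendant u) (H.pendant (φ u)) := by
  have htl' : ∀ a, G.tl (ψ.symm a) = φ.symm (H.tl a) := by
    intro a; apply φ.injective; rw [Equiv.apply_symm_apply, ← htl, Equiv.apply_symm_apply]
  have hhd' : ∀ a, G.hd (ψ.symm a) = φ.symm (H.hd a) := by
    intro a; apply φ.injective; rw [Equiv.apply_symm_apply, ← hhd, Equiv.apply_symm_apply]
  have hrev : ∀ {a b : H.V}, H.Reaches a b → G.Reaches (φ.symm a) (φ.symm b) :=
    fun h => reaches_map φ.symm ψ.symm htl' hhd' h
  refine ⟨⟨fun y => ⟨φ y.1, reaches_map φ ψ htl hhd y.2⟩,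
      fun z => ⟨φ.symm z.1, by simpa using hrev z.2⟩,
      fun y => Subtype.ext (by simp), fun z => Subtype.ext (by simp)⟩,
    ⟨fun A => ⟨ψ A.1, by rw [htl]; exact reaches_map φ ψ htl hhd A.2⟩,
      fun B => ⟨ψ.symm B.1, by rw [htl']; simpa using hrev B.2⟩,
      fun A => Subtype.ext (by simp), fun B => Subtype.ext (by simp)⟩,
    fun A => Subtype.ext (htl A.1), fun A => Subtype.ext (hhd A.1),
    Subtype.ext rfl, fun y => hlab y.1⟩


/-- Paths in `G` from `v` to the index vertex. -/
inductive PathFrom (G : Dgr X) (v : G.V) : G.V → Type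
  | nil : PathFrom G v v
  | cons {w : G.V} (s : PathFrom G v w) (a : G.A) (h : G.tl a = w) : PathFrom G v (G.hd a)

def graft (G : Dgr X) {v : G.V} (p : RPath G v) : ∀ {w : G.V}, PathFrom G v w → RPath G w
  | _, .nil => p
  | _, .cons s a h => .cons (G.graft p s) a h

def unconsP (G : Dgr X) : (Σ v : G.V, RPath G v) → Option ((Σ v : G.V, RPath G v) × G.A)
  | ⟨_, .nil⟩ => none
  | ⟨_, .cons (v := u) p a _⟩ => some (⟨u, p⟩, a)

def rlen (G : Dgr X) : ∀ {v : G.V}, RPath G v → ℕ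
  | _, .nil => 0
  | _, .cons p _ _ => G.rlen p + 1

def plen (G : Dgr X) {v : G.V} : ∀ {w : G.V}, PathFrom G v w → ℕ
  | _, .nil => 0
  | _, .cons s _ _ => G.plen s + 1

theorem rlen_graft (G : Dgr X) {v : G.V} (p : RPath G v) :
    ∀ {w} (s : PathFrom G v w), G.rlen (G.graft p s) = G.rlen p + G.plen s
  | _, .nil => rfl
  | _, .cons s a h => by
      show G.rlen (G.graft p s) + 1 = _
      rw [rlen_graft G p s]; rfl

theorem graft_inj (G : Dgr X) {v : G.V} (p : RPath G v) :
    ∀ {w : G.V} (s : PathFrom G v w) {w' : G.V} (s' : PathFrom G v w'),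
    (⟨w, G.graft p s⟩ : Σ u, RPath G u) = ⟨w', G.graft p s'⟩ →
    (⟨w, s⟩ : Σ u, PathFrom G v u) = ⟨w', s'⟩ := by
  intro w s
  induction s with
  | nil =>
    intro w' s' h
    cases s' with
    | nil => rfl
    | cons s' a ha =>
      exfalso
      have hl := congrArg (fun x : Σ u, RPath G u => G.rlen x.2) h
      simp only at hl
      rw [show G.graft p (PathFrom.nil) = p from rfl] at hl
      have : G.rlen (G.graft p (PathFrom.cons s' a ha)) = G.rlen p + (G.plen s' + 1) :=
        rlen_graft G p _
      omega
  | cons s a ha ih =>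
    intro w' s' h
    cases s' with
    | nil =>
      exfalso
      have hl := congrArg (fun x : Σ u, RPath G u => G.rlen x.2) h
      simp only at hl
      have : G.rlen (G.graft p (PathFrom.cons s a ha)) = G.rlen p + (G.plen s + 1) :=
        rlen_graft G p _
      rw [show G.graft p (PathFrom.nil) = p from rfl] at hl
      omega
    | cons s' a' ha' =>
      have hu := congrArg G.unconsP h
      simp only [graft, unconsP] at hu
      obtain ⟨h1, h2⟩ := Prod.mk.injEq _ _ _ _ ▸ Option.some.inj hu
      subst h2
      have h3 := ih s' h1
      rw [Sigma.mk.inj_iff] at h3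
      obtain ⟨rfl, h4⟩ := h3
      have h4 := eq_of_heq h4
      subst h4
      rfl

theorem graft_reaches (G : Dgr X) {v : G.V} (p : RPath G v) :
    ∀ {w} (s : PathFrom G v w), G.Ustar.Reaches ⟨v, p⟩ ⟨w, G.graft p s⟩
  | _, .nil => Relation.ReflTransGen.refl
  | _, .cons s a h => (graft_reaches G p s).tail ⟨⟨_, (G.graft p s, ⟨a, h⟩)⟩, rfl, rfl⟩

theorem graft_surj (G : Dgr X) {v : G.V} (p : RPath G v) (x : Σ u, RPath G u)
    (h : G.Ustar.Reaches ⟨v, p⟩ x) :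
    ∃ z : Σ w, PathFrom G v w, (⟨z.1, G.graft p z.2⟩ : Σ u, RPath G u) = x := by
  induction h with
  | refl => exact ⟨⟨v, .nil⟩, rfl⟩
  | tail hr step ih =>
    obtain ⟨⟨z1, z2⟩, rfl⟩ := ih
    obtain ⟨⟨u, r, a, ha⟩, hA1, hA2⟩ := step
    have hA1' : (⟨u, r⟩ : Σ u, RPath G u) = ⟨z1, G.graft p z2⟩ := hA1
    rw [Sigma.mk.inj_iff] at hA1'
    obtain ⟨rfl, h2⟩ := hA1'
    have h2 := eq_of_heq h2
    subst h2
    exact ⟨⟨_, .cons z2 a ha⟩, hA2⟩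

noncomputable def pathEquivV (G : Dgr X) {v : G.V} (p : RPath G v) :
    (Σ w, PathFrom G v w) ≃ (G.Ustar.pendant ⟨v, p⟩).V :=
  Equiv.ofBijective (fun z => ⟨⟨z.1, G.graft p z.2⟩, graft_reaches G p z.2⟩)
    ⟨fun z z' h => graft_inj G p z.2 z'.2 (congrArg Subtype.val h),
     fun x => by
      obtain ⟨z, hz⟩ := graft_surj G p x.1 x.2
      exact ⟨z, Subtype.ext hz⟩⟩

noncomputable def pathEquivA (G : Dgr X) {v : G.V} (p : RPath G v) :
    (Σ w, PathFrom G v w × {a : G.A // G.tl a = w}) ≃ (G.Ustar.pendant ⟨v, p⟩).A :=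
  Equiv.ofBijective (fun z => ⟨⟨z.1, (G.graft p z.2.1, z.2.2)⟩, graft_reaches G p z.2.1⟩)
    ⟨by
      rintro ⟨w, s, a⟩ ⟨w', s', a'⟩ h
      have h' := congrArg Subtype.val h
      simp only at h'
      replace h' := Sigma.mk.inj_iff.mp h'
      obtain ⟨rfl, h2⟩ := h'
      have h2 := eq_of_heq h2
      obtain ⟨h3, h4⟩ := Prod.ext_iff.mp h2
      subst h4
      have h5 := graft_inj G p s s' (congrArg (Sigma.mk w) h3)
      rw [Sigma.mk.inj_iff] at h5
      obtain ⟨-, h6⟩ := h5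
      have h6 := eq_of_heq h6
      subst h6
      rfl,
     by
      rintro ⟨⟨u, r, a, ha⟩, hA⟩
      obtain ⟨⟨w, s⟩, hz⟩ := graft_surj G p ⟨u, r⟩ hA
      rw [Sigma.mk.inj_iff] at hz
      obtain ⟨rfl, h2⟩ := hz
      have h2 := eq_of_heq h2
      subst h2
      exact ⟨⟨w, s, ⟨a, ha⟩⟩, Subtype.ext rfl⟩⟩

theorem iso_pendant_of_eq_end (G : Dgr X) {v : G.V} (p q : RPath G v) :
    Iso (G.Ustar.pendant ⟨v, p⟩) (G.Ustar.pendant ⟨v, q⟩) := by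
  refine ⟨(pathEquivV G p).symm.trans (pathEquivV G q),
    (pathEquivA G p).symm.trans (pathEquivA G q), ?_, ?_, ?_, ?_⟩
  · intro A
    obtain ⟨z, rfl⟩ := (pathEquivA G p).surjective A
    simp only [Equiv.trans_apply, Equiv.symm_apply_apply]
    have h1 : (G.Ustar.pendant ⟨v, p⟩).tl (pathEquivA G p z) = pathEquivV G p ⟨z.1, z.2.1⟩ :=
      Subtype.ext rfl
    have h2 : (G.Ustar.pendant ⟨v, q⟩).tl (pathEquivA G q z) = pathEquivV G q ⟨z.1, z.2.1⟩ :=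
      Subtype.ext rfl
    rw [h1, h2]; simp
  · intro A
    obtain ⟨z, rfl⟩ := (pathEquivA G p).surjective A
    simp only [Equiv.trans_apply, Equiv.symm_apply_apply]
    have h1 : (G.Ustar.pendant ⟨v, p⟩).hd (pathEquivA G p z) =
        pathEquivV G p ⟨G.hd z.2.2.1, .cons z.2.1 z.2.2.1 z.2.2.2⟩ := Subtype.ext rfl
    have h2 : (G.Ustar.pendant ⟨v, q⟩).hd (pathEquivA G q z) =
        pathEquivV G q ⟨G.hd z.2.2.1, .cons z.2.1 z.2.2.1 z.2.2.2⟩ := Subtype.ext rfl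
    rw [h1, h2]; simp
  · have h1 : (G.Ustar.pendant ⟨v, p⟩).root = pathEquivV G p ⟨v, .nil⟩ := Subtype.ext rfl
    have h2 : (G.Ustar.pendant ⟨v, q⟩).root = pathEquivV G q ⟨v, .nil⟩ := Subtype.ext rfl
    rw [h1, h2]; simp
  · intro y
    obtain ⟨z, rfl⟩ := (pathEquivV G p).surjective y
    simp only [Equiv.trans_apply, Equiv.symm_apply_apply]
    rfl


theorem cover_pair_of_card_two {α : Type} (h : Nat.card α = 2) {a b : α}
    (hab : a ≠ b) (x : α) : x = a ∨ x = b := by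
  obtain ⟨x0, y0, hxy, hcov⟩ := Nat.card_eq_two_iff.mp h
  have hm : ∀ z : α, z = x0 ∨ z = y0 := fun z => by
    have : z ∈ ({x0, y0} : Set α) := hcov ▸ Set.mem_univ z
    simpa using this
  rcases hm a with rfl | rfl <;> rcases hm b with rfl | rfl <;> rcases hm x with rfl | rfl <;>
    tauto

theorem two_le_card_of_ne {α : Type} [Finite α] {a b : α} (h : a ≠ b) : 2 ≤ Nat.card α :=
  Finite.one_lt_card_iff_nontrivial.mpr ⟨a, b, h⟩

noncomputable def ustarOutEquiv (G : Dgr X) (w : G.V) (r : RPath G w) :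
    {a : G.A // G.tl a = w} ≃ {A : G.Ustar.A // G.Ustar.tl A = ⟨w, r⟩} :=
  Equiv.ofBijective (fun a => ⟨⟨w, (r, a)⟩, rfl⟩)
    ⟨by
      rintro a a' h
      have h' := congrArg Subtype.val h
      simp only at h'
      replace h' := Sigma.mk.inj_iff.mp h'
      obtain ⟨-, h2⟩ := h'
      have h2 := eq_of_heq h2
      exact congrArg Prod.snd h2,
     by
      rintro ⟨⟨u, r', b⟩, h⟩
      have h' : (⟨u, r'⟩ : Σ v, RPath G v) = ⟨w, r⟩ := h
      rw [Sigma.mk.inj_iff] at h'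
      obtain ⟨rfl, h2⟩ := h'
      have h2 := eq_of_heq h2
      subst h2
      exact ⟨b, Subtype.ext rfl⟩⟩

theorem ustar_outdeg (G : Dgr X) (w : G.V) (r : RPath G w) :
    G.Ustar.outdeg ⟨w, r⟩ = G.outdeg w :=
  (Nat.card_congr (ustarOutEquiv G w r)).symm

theorem ustar_in_unique (G : Dgr X) {u : G.V} (r : RPath G u) (a : G.A) (ha : G.tl a = u)
    (A : G.Ustar.A) (h : G.Ustar.hd A = ⟨G.hd a, .cons r a ha⟩) :
    A = ⟨u, (r, ⟨a, ha⟩)⟩ := by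
  obtain ⟨u', r', a', ha'⟩ := A
  have hu := congrArg G.unconsP h
  simp only [Ustar, unconsP] at hu
  obtain ⟨h1, h2⟩ := Prod.ext_iff.mp (Option.some.inj hu)
  rw [Sigma.mk.inj_iff] at h1
  obtain ⟨rfl, h3⟩ := h1
  have h3 := eq_of_heq h3
  subst h3
  subst h2
  rfl

theorem ustar_indeg_cons (G : Dgr X) {u : G.V} (r : RPath G u) (a : G.A) (ha : G.tl a = u) :
    G.Ustar.indeg ⟨G.hd a, .cons r a ha⟩ = 1 := by
  have : Unique {A : G.Ustar.A // G.Ustar.hd A = ⟨G.hd a, .cons r a ha⟩} :=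
    { default := ⟨⟨u, (r, ⟨a, ha⟩)⟩, rfl⟩
      uniq := fun A => Subtype.ext (ustar_in_unique G r a ha A.1 A.2) }
  exact Nat.card_unique

noncomputable def rootOutEquiv (G : Dgr X) {v : G.V} (p : RPath G v) :
    {a : G.A // G.tl a = v} ≃
      {A : (G.Ustar.pendant ⟨v, p⟩).A //
        (G.Ustar.pendant ⟨v, p⟩).tl A = (G.Ustar.pendant ⟨v, p⟩).root} :=
  (ustarOutEquiv G v p).trans
    ⟨fun B => ⟨⟨B.1, by rw [B.2]; exact Relation.ReflTransGen.refl⟩, Subtype.ext B.2⟩,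
     fun A => ⟨A.1.1, congrArg Subtype.val A.2⟩,
     fun B => Subtype.ext rfl,
     fun A => Subtype.ext (Subtype.ext rfl)⟩

theorem iso_children (N : Dgr X) {v w : N.V} (p : RPath N v) (q : RPath N w)
    (φ : (N.Ustar.pendant ⟨v, p⟩).V ≃ (N.Ustar.pendant ⟨w, q⟩).V)
    (ψ : (N.Ustar.pendant ⟨v, p⟩).A ≃ (N.Ustar.pendant ⟨w, q⟩).A)
    (htl : ∀ a, (N.Ustar.pendant ⟨w, q⟩).tl (ψ a) = φ ((N.Ustar.pendant ⟨v, p⟩).tl a))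
    (hhd : ∀ a, (N.Ustar.pendant ⟨w, q⟩).hd (ψ a) = φ ((N.Ustar.pendant ⟨v, p⟩).hd a))
    (hroot : φ (N.Ustar.pendant ⟨v, p⟩).root = (N.Ustar.pendant ⟨w, q⟩).root)
    (hlab : ∀ y, (N.Ustar.pendant ⟨w, q⟩).lab (φ y) = (N.Ustar.pendant ⟨v, p⟩).lab y) :
    ∃ e : {a : N.A // N.tl a = v} ≃ {b : N.A // N.tl b = w},
      ∀ a : {a : N.A // N.tl a = v},
        Iso (N.Ustar.pendant ⟨N.hd a.1, .cons p a.1 a.2⟩)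
            (N.Ustar.pendant ⟨N.hd (e a).1, .cons q (e a).1 (e a).2⟩) := by
  have hrestr : ∀ A : {A : (N.Ustar.pendant ⟨v, p⟩).A //
      (N.Ustar.pendant ⟨v, p⟩).tl A = (N.Ustar.pendant ⟨v, p⟩).root},
      (N.Ustar.pendant ⟨w, q⟩).tl (ψ A.1) = (N.Ustar.pendant ⟨w, q⟩).root := by
    intro A; rw [htl, A.2, hroot]
  have hrestr' : ∀ B : {B : (N.Ustar.pendant ⟨w, q⟩).A //
      (N.Ustar.pendant ⟨w, q⟩).tl B = (N.Ustar.pendant ⟨w, q⟩).root},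
      (N.Ustar.pendant ⟨v, p⟩).tl (ψ.symm B.1) = (N.Ustar.pendant ⟨v, p⟩).root := by
    intro B
    apply φ.injective
    rw [← htl, Equiv.apply_symm_apply, B.2, hroot]
  refine ⟨(rootOutEquiv N p).trans
    ((⟨fun A => ⟨ψ A.1, hrestr A⟩, fun B => ⟨ψ.symm B.1, hrestr' B⟩,
        fun A => Subtype.ext (by simp), fun B => Subtype.ext (by simp)⟩ :
      {A : (N.Ustar.pendant ⟨v, p⟩).A //
        (N.Ustar.pendant ⟨v, p⟩).tl A = (N.Ustar.pendant ⟨v, p⟩).root} ≃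
      {B : (N.Ustar.pendant ⟨w, q⟩).A //
        (N.Ustar.pendant ⟨w, q⟩).tl B = (N.Ustar.pendant ⟨w, q⟩).root}).trans
      (rootOutEquiv N q).symm), fun a => ?_⟩
  simp only [Equiv.trans_apply]
  have key : ∀ b : {b : N.A // N.tl b = w},
      (rootOutEquiv N q) b = ⟨ψ ((rootOutEquiv N p) a).1, hrestr ((rootOutEquiv N p) a)⟩ →
      Iso (N.Ustar.pendant ⟨N.hd a.1, .cons p a.1 a.2⟩)
          (N.Ustar.pendant ⟨N.hd b.1, .cons q b.1 b.2⟩) := by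
    intro b hb2
    have i1 := (iso_pendant_pendant N.Ustar ⟨v, p⟩
      ((N.Ustar.pendant ⟨v, p⟩).hd ((rootOutEquiv N p) a).1)).symm
    have i2 := iso_pendant_congr φ ψ htl hhd hlab
      ((N.Ustar.pendant ⟨v, p⟩).hd ((rootOutEquiv N p) a).1)
    have i3 := iso_pendant_pendant N.Ustar ⟨w, q⟩
      ((N.Ustar.pendant ⟨w, q⟩).hd ((rootOutEquiv N q) b).1)
    have hφ : φ ((N.Ustar.pendant ⟨v, p⟩).hd ((rootOutEquiv N p) a).1) =
        (N.Ustar.pendant ⟨w, q⟩).hd ((rootOutEquiv N q) b).1 := by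
      rw [hb2]; exact (hhd _).symm
    rw [hφ] at i2
    exact i1.trans (i2.trans i3)
  exact key _ (Equiv.apply_symm_apply _ _)


theorem end_eq_of_iso_pendant {N : Dgr X} (hN : N.IsPhyloNetwork) (hb : N.BinaryNet)
    (hc : N.Compressed) (hts : N.TreeSibling) :
    ∀ (v : N.V) (p : RPath N v) (w : N.V) (q : RPath N w),
      Iso (N.Ustar.pendant ⟨v, p⟩) (N.Ustar.pendant ⟨w, q⟩) → v = w := by
  haveI : Finite N.V := hN.1.1.1
  haveI : Finite N.A := hN.1.1.2.1
  have hacyc : N.Acyclic := hN.1.1.2.2.1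
  have hwf : WellFounded (fun u v : N.V => Relation.TransGen N.arcRel v u) := by
    haveI : IsTrans N.V (fun u v : N.V => Relation.TransGen N.arcRel v u) :=
      ⟨fun a b c h1 h2 => Relation.TransGen.trans h2 h1⟩
    haveI : IsIrrefl N.V (fun u v : N.V => Relation.TransGen N.arcRel v u) :=
      ⟨fun a h => hacyc a h⟩
    exact Finite.wellFounded_of_trans_of_irrefl _
  intro v
  refine hwf.induction (C := fun v => ∀ (p : RPath N v) (w : N.V) (q : RPath N w),
    Iso (N.Ustar.pendant ⟨v, p⟩) (N.Ustar.pendant ⟨w, q⟩) → v = w) v ?_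
  clear v
  intro v ih p w q hiso
  by_contra hvw
  obtain ⟨φ, ψ, htl, hhd, hroot, hlab⟩ := hiso
  obtain ⟨e, he⟩ := iso_children N p q φ ψ htl hhd hroot hlab
  have hepres : ∀ a : {a : N.A // N.tl a = v}, N.hd (e a).1 = N.hd a.1 := fun a =>
    (ih (N.hd a.1) (Relation.TransGen.single ⟨a.1, a.2, rfl⟩) (.cons p a.1 a.2)
      (N.hd (e a).1) (.cons q (e a).1 (e a).2) (he a)).symm
  have hdeg : N.outdeg v = N.outdeg w := Nat.card_congr e
  have hlabvw : N.lab w = N.lab v := by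
    have h0 := hlab (N.Ustar.pendant ⟨v, p⟩).root
    rw [hroot] at h0
    exact h0
  have harcne : ∀ x : {a : N.A // N.tl a = v}, x.1 ≠ (e x).1 := fun x hh =>
    hvw (by rw [← x.2, ← (e x).2, hh])
  have houtcases : ∀ u : N.V, N.outdeg u = 0 ∨ N.outdeg u = 1 ∨ N.outdeg u = 2 := by
    intro u
    by_cases hu : u = N.root
    · subst hu; right; right; exact hb.1
    · rcases hN.1.2.2.1 u hu with htree | hret
      · rcases (hb.2 u hu).2 htree.1 with h0 | h2
        · left; exact h0
        · right; right; exact h2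
      · right; left; exact hret.1
  have hretOf : ∀ u : N.V, N.outdeg u = 1 → N.IsRetVertex u := by
    intro u h1
    by_cases hu : u = N.root
    · subst hu; rw [hb.1] at h1; omega
    · rcases hN.1.2.2.1 u hu with htree | hret
      · rcases htree.2 with h0 | h2 <;> omega
      · exact hret
  have hretin : ∀ c : N.V, 2 ≤ N.indeg c → N.IsRetVertex c ∧ c ≠ N.root ∧ N.indeg c = 2 := by
    intro c h2
    have hcr : c ≠ N.root := by
      intro hcr
      rw [hcr, hN.1.1.2.2.2.1] at h2
      omega
    rcases hN.1.2.2.1 c hcr with htree | hret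
    · rw [htree.1] at h2; omega
    · exact ⟨hret, hcr, (hb.2 c hcr).1 hret⟩
  rcases houtcases v with h0 | h1 | h2
  · obtain ⟨x, hx⟩ := (hN.1.2.2.2.1 v).mpr h0
    have h0w : N.outdeg w = 0 := by omega
    obtain ⟨u, hu1, hu2⟩ := hN.1.2.2.2.2 x
    exact hvw ((hu2 v hx).trans (hu2 w (hlabvw.trans hx)).symm)
  · obtain ⟨a0, ha0⟩ := Nat.card_eq_one_iff_exists.mp h1
    have hhd0 : N.hd (e a0).1 = N.hd a0.1 := hepres a0
    have hin2 : 2 ≤ N.indeg (N.hd a0.1) :=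
      two_le_card_of_ne (a := (⟨a0.1, rfl⟩ : {x : N.A // N.hd x = N.hd a0.1}))
        (b := ⟨(e a0).1, hhd0⟩) (fun hh => harcne a0 (congrArg Subtype.val hh))
    have hretv : N.IsRetVertex v := hretOf v h1
    have htree := hc a0.1 (by rw [a0.2]; exact hretv)
    rw [htree.1] at hin2
    omega
  · have h2w : N.outdeg w = 2 := by omega
    obtain ⟨a1, a2, ha12, -⟩ := Nat.card_eq_two_iff.mp h2
    have hcov : ∀ x : {a : N.A // N.tl a = v}, x = a1 ∨ x = a2 :=
      cover_pair_of_card_two h2 ha12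
    have hc12 : N.hd a1.1 ≠ N.hd a2.1 := fun hh =>
      ha12 (Subtype.ext (hN.2 a1.1 a2.1 (a1.2.trans a2.2.symm) hh))
    have hb1 : N.hd (e a1).1 = N.hd a1.1 := hepres a1
    have hb2' : N.hd (e a2).1 = N.hd a2.1 := hepres a2
    have hin1 : 2 ≤ N.indeg (N.hd a1.1) :=
      two_le_card_of_ne (a := (⟨a1.1, rfl⟩ : {x : N.A // N.hd x = N.hd a1.1}))
        (b := ⟨(e a1).1, hb1⟩) (fun hh => harcne a1 (congrArg Subtype.val hh))
    have hin2' : 2 ≤ N.indeg (N.hd a2.1) :=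
      two_le_card_of_ne (a := (⟨a2.1, rfl⟩ : {x : N.A // N.hd x = N.hd a2.1}))
        (b := ⟨(e a2).1, hb2'⟩) (fun hh => harcne a2 (congrArg Subtype.val hh))
    obtain ⟨hret1, hc1r, hin1e⟩ := hretin (N.hd a1.1) hin1
    have hc2nt : ¬ N.IsTreeVertex (N.hd a2.1) := fun ht => by
      rw [ht.1] at hin2'; omega
    have hinc1 : ∀ x : {x : N.A // N.hd x = N.hd a1.1},
        x = ⟨a1.1, rfl⟩ ∨ x = ⟨(e a1).1, hb1⟩ :=
      fun x => cover_pair_of_card_two hin1e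
        (fun hh => harcne a1 (congrArg Subtype.val hh)) x
    have hbne : e a1 ≠ e a2 := fun hh => hc12 (by rw [← hb1, ← hb2', hh])
    have hcovw : ∀ x : {b : N.A // N.tl b = w}, x = e a1 ∨ x = e a2 :=
      fun x => cover_pair_of_card_two h2w hbne x
    obtain ⟨s, hsne, hstree, d, f, hdf, hdc1, hfs⟩ := hts (N.hd a1.1) hret1
    rcases hinc1 ⟨d, hdc1⟩ with hd1 | hd2
    · have hdval : d = a1.1 := congrArg Subtype.val hd1
      have htlf : N.tl f = v := by rw [← hdf, hdval]; exact a1.2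
      rcases hcov ⟨f, htlf⟩ with hf1 | hf2
      · apply hsne
        rw [← hfs, show f = a1.1 from congrArg Subtype.val hf1]
      · apply hc2nt
        have hfv : f = a2.1 := congrArg Subtype.val hf2
        rw [← hfs, hfv] at hstree
        exact hstree
    · have hdval : d = (e a1).1 := congrArg Subtype.val hd2
      have htlf : N.tl f = w := by rw [← hdf, hdval]; exact (e a1).2
      rcases hcovw ⟨f, htlf⟩ with hf1 | hf2
      · apply hsne
        rw [← hfs, show f = (e a1).1 from congrArg Subtype.val hf1]
        exact hb1
      · apply hc2nt
        have hfv : f = (e a2).1 := congrArg Subtype.val hf2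
        rw [← hfs, hfv] at hstree
        rw [hb2'] at hstree
        exact hstree

theorem exists_rpath {G : Dgr X} {v : G.V} (h : G.Reaches G.root v) :
    Nonempty (RPath G v) := by
  induction h with
  | refl => exact ⟨.nil⟩
  | tail h step ih =>
    obtain ⟨a, ha, rfl⟩ := step
    obtain ⟨p⟩ := ih
    exact ⟨.cons p a ha⟩

theorem fstar_isFolding {G : Dgr X} (hreach : ∀ v, G.Reaches G.root v) :
    (fstar G).IsFolding := by
  refine ⟨?_, ?_, ?_⟩
  · intro v
    obtain ⟨p⟩ := exists_rpath (hreach v)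
    exact ⟨⟨v, p⟩, rfl⟩
  · intro a
    obtain ⟨p⟩ := exists_rpath (hreach (G.tl a))
    exact ⟨⟨G.tl a, (p, ⟨a, rfl⟩)⟩, rfl⟩
  · intro a x hx
    obtain ⟨xv, xp⟩ := x
    refine ⟨⟨xv, (xp, ⟨a, hx.symm⟩)⟩, ⟨rfl, rfl⟩, ?_⟩
    rintro ⟨u, r, a', ha'⟩ ⟨h1, h2⟩
    subst h2
    have h1' : (⟨u, r⟩ : Σ v, RPath G v) = ⟨xv, xp⟩ := h1
    rw [Sigma.mk.inj_iff] at h1'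
    obtain ⟨rfl, h3⟩ := h1'
    have h3 := eq_of_heq h3
    subst h3
    rfl

theorem tree_not_ret {N : Dgr X} {z : N.V} (ht : N.IsTreeVertex z) (hr : N.IsRetVertex z) :
    False := by
  have := hr.2
  rw [ht.1] at this
  omega

theorem ret_of_outdeg_one' {N : Dgr X} (hN : N.IsPhyloNetwork) (hb : N.BinaryNet)
    {u : N.V} (h1 : N.outdeg u = 1) : N.IsRetVertex u := by
  by_cases hu : u = N.root
  · subst hu; rw [hb.1] at h1; omega
  · rcases hN.1.2.2.1 u hu with htree | hret
    · rcases htree.2 with h0 | h2 <;> omega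
    · exact hret

theorem rpath_at_root {G : Dgr X} [Finite G.A] (hroot : G.indeg G.root = 0)
    (x : Σ v, RPath G v) (hx : x.1 = G.root) : x = ⟨G.root, .nil⟩ := by
  obtain ⟨xv, xr⟩ := x
  cases xr with
  | nil => rfl
  | cons p a h =>
    exfalso
    have hemp : IsEmpty {b : G.A // G.hd b = G.root} := by
      rcases Nat.card_eq_zero.mp hroot with h' | h'
      · exact h'
      · exact absurd h' (not_infinite_iff_finite.mpr inferInstance)
    exact hemp.false ⟨a, hx⟩

theorem not_keep_degs {G : Dgr X} {v : G.V} (h : ¬ G.Keep v) :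
    v ≠ G.root ∧ G.indeg v = 1 ∧ G.outdeg v = 1 := by
  simp only [Keep, not_or, not_not] at h
  exact ⟨h.1, h.2⟩

theorem ustar_keep_iff {N : Dgr X} (hN : N.IsPhyloNetwork) (hb : N.BinaryNet)
    (x : N.Ustar.V) : N.Ustar.Keep x ↔ ¬ N.IsRetVertex x.1 := by
  haveI : Finite N.A := hN.1.1.2.1
  obtain ⟨xv, xr⟩ := x
  cases xr with
  | nil =>
    simp only
    constructor
    · intro _ hret
      have h1 := hret.1
      rw [hb.1] at h1
      omega
    · intro _
      exact Or.inl rfl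
  | cons p a h =>
    simp only
    constructor
    · intro hk hret
      rcases hk with hk | hk
      · have hk' : (⟨N.hd a, RPath.cons p a h⟩ : Σ v, RPath N v) = ⟨N.root, .nil⟩ := hk
        have := congrArg N.unconsP hk'
        simp [unconsP] at this
      · apply hk
        refine ⟨ustar_indeg_cons N p a h, ?_⟩
        rw [ustar_outdeg N (N.hd a) (.cons p a h)]
        exact hret.1
    · intro hret
      right
      intro ⟨hin, hout⟩
      apply hret
      apply ret_of_outdeg_one' hN hb
      rw [ustar_outdeg N (N.hd a) (.cons p a h)] at hout
      exact hout

theorem keep_hd_of_not_keep_tl {N : Dgr X} (hN : N.IsPhyloNetwork) (hb : N.BinaryNet)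
    (hc : N.Compressed) (A : N.Ustar.A) (h : ¬ N.Ustar.Keep (N.Ustar.tl A)) :
    N.Ustar.Keep (N.Ustar.hd A) := by
  obtain ⟨u, r, a, ha⟩ := A
  rw [ustar_keep_iff hN hb] at h
  push_neg at h
  rw [ustar_keep_iff hN hb]
  intro hret
  have htree := hc a (ha ▸ h)
  exact tree_not_ret htree hret

theorem keep_tl_of_not_keep_hd {N : Dgr X} (hN : N.IsPhyloNetwork) (hb : N.BinaryNet)
    (hc : N.Compressed) (A : N.Ustar.A) (h : ¬ N.Ustar.Keep (N.Ustar.hd A)) :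
    N.Ustar.Keep (N.Ustar.tl A) := by
  obtain ⟨u, r, a, ha⟩ := A
  rw [ustar_keep_iff hN hb] at h
  push_neg at h
  rw [ustar_keep_iff hN hb]
  intro hret
  have htree := hc a (ha ▸ hret)
  exact tree_not_ret htree h

theorem isSuppArc_single {G : Dgr X} {A : G.A} (h1 : G.Keep (G.tl A))
    (h2 : G.Keep (G.hd A)) : G.IsSuppArc [A] := by
  refine ⟨by simp, ?_, h1, ?_, ?_⟩
  · intro p a b s hps
    exfalso
    have := congrArg List.length hps
    simp at this
    omega
  · simpa [endV] using h2
  · intro p a s hps hs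
    exfalso
    have := congrArg List.length hps
    simp at this
    rcases List.length_eq_zero_iff.mp (by omega : s.length = 0) with rfl
    exact hs rfl

theorem isSuppArc_pair {G : Dgr X} {A B : G.A} (hchain : G.hd A = G.tl B)
    (h1 : G.Keep (G.tl A)) (h2 : ¬ G.Keep (G.hd A)) (h3 : G.Keep (G.hd B)) :
    G.IsSuppArc [A, B] := by
  refine ⟨by simp, ?_, h1, ?_, ?_⟩
  · intro p a b s hps
    cases p with
    | nil =>
      simp at hps
      obtain ⟨rfl, rfl, -⟩ := hps
      exact hchain
    | cons x t =>
      exfalso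
      have := congrArg List.length hps
      simp at this
      omega
  · simpa [endV] using h3
  · intro p a s hps hs
    cases p with
    | nil =>
      simp at hps
      obtain ⟨rfl, rfl⟩ := hps
      exact h2
    | cons x t =>
      cases t with
      | nil =>
        simp at hps
        obtain ⟨rfl, rfl, rfl⟩ := hps
        exact absurd rfl hs
      | cons y u =>
        exfalso
        have := congrArg List.length hps
        simp at this

theorem suppArc_cases {G : Dgr X}
    (Hs : ∀ B : G.A, ¬ G.Keep (G.tl B) → G.Keep (G.hd B))
    {l : List G.A} (hl : G.IsSuppArc l) :
    (∃ A, l = [A] ∧ G.Keep (G.tl A) ∧ G.Keep (G.hd A)) ∨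
    (∃ A B, l = [A, B] ∧ G.hd A = G.tl B ∧ G.Keep (G.tl A) ∧ ¬ G.Keep (G.hd A) ∧
      G.Keep (G.hd B)) := by
  obtain ⟨hne, hchain, hstart, hend, hint⟩ := hl
  match l, hne with
  | [A], _ =>
    left
    exact ⟨A, rfl, hstart, hend⟩
  | A :: B :: t, _ =>
    right
    have hAB : G.hd A = G.tl B := hchain [] A B t rfl
    have hintA : ¬ G.Keep (G.hd A) := hint [] A (B :: t) rfl (by simp)
    have hkB : G.Keep (G.hd B) := Hs B (by rw [← hAB]; exact hintA)
    match t with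
    | [] => exact ⟨A, B, rfl, hAB, hstart, hintA, hkB⟩
    | C :: t' =>
      exfalso
      exact (hint [A] B (C :: t') rfl (by simp)) hkB

theorem suppArc_exists_unique {G : Dgr X}
    (Hs : ∀ B : G.A, ¬ G.Keep (G.tl B) → G.Keep (G.hd B))
    (Hp : ∀ B : G.A, ¬ G.Keep (G.hd B) → G.Keep (G.tl B))
    (A0 : G.A) : ∃! l : List G.A, G.IsSuppArc l ∧ A0 ∈ l := by
  by_cases h2 : G.Keep (G.tl A0)
  · by_cases h1 : G.Keep (G.hd A0)
    · refine ⟨[A0], ⟨isSuppArc_single h2 h1, by simp⟩, ?_⟩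
      rintro l ⟨hl, hmem⟩
      rcases suppArc_cases Hs hl with ⟨A, rfl, hA1, hA2⟩ | ⟨A, B, rfl, hAB, hB1, hB2, hB3⟩
      · simp at hmem; subst hmem; rfl
      · simp at hmem
        rcases hmem with rfl | rfl
        · exact absurd h1 hB2
        · rw [hAB] at hB2; exact absurd h2 hB2
    · have hout : G.outdeg (G.hd A0) = 1 := (not_keep_degs h1).2.2
      obtain ⟨hsub, hne⟩ := Nat.card_eq_one_iff_unique.mp hout
      obtain ⟨B0⟩ := hne
      refine ⟨[A0, B0.1], ⟨isSuppArc_pair B0.2.symm h2 h1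
        (Hs B0.1 (by rw [B0.2]; exact h1)), by simp⟩, ?_⟩
      rintro l ⟨hl, hmem⟩
      rcases suppArc_cases Hs hl with ⟨A, rfl, hA1, hA2⟩ | ⟨A, B, rfl, hAB, hB1, hB2, hB3⟩
      · simp at hmem; subst hmem; exact absurd hA2 h1
      · simp at hmem
        rcases hmem with rfl | rfl
        · have : (⟨B, hAB.symm⟩ : {a : G.A // G.tl a = G.hd A0}) = B0 := hsub.elim _ _
          rw [show B = B0.1 from congrArg Subtype.val this]
        · rw [hAB] at hB2; exact absurd h2 hB2
  · have h1 : G.Keep (G.hd A0) := Hs A0 h2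
    have hin : G.indeg (G.tl A0) = 1 := (not_keep_degs h2).2.1
    obtain ⟨hsub, hne⟩ := Nat.card_eq_one_iff_unique.mp hin
    obtain ⟨C0⟩ := hne
    refine ⟨[C0.1, A0], ⟨isSuppArc_pair C0.2 (Hp C0.1 (by rw [C0.2]; exact h2))
      (by rw [C0.2]; exact h2) h1, by simp⟩, ?_⟩
    rintro l ⟨hl, hmem⟩
    rcases suppArc_cases Hs hl with ⟨A, rfl, hA1, hA2⟩ | ⟨A, B, rfl, hAB, hB1, hB2, hB3⟩
    · simp at hmem; subst hmem; exact absurd hA1 h2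
    · simp at hmem
      rcases hmem with rfl | rfl
      · exact absurd hB1 h2
      · have : (⟨A, hAB⟩ : {a : G.A // G.hd a = G.tl A0}) = C0 := hsub.elim _ _
        rw [show A = C0.1 from congrArg Subtype.val this]

theorem ustar_subdivision {N : Dgr X} (hN : N.IsPhyloNetwork) (hb : N.BinaryNet)
    (hc : N.Compressed) : IsSubdivisionOf N.Ustar N.U := by
  have Hs := keep_hd_of_not_keep_tl hN hb hc
  have Hp := keep_tl_of_not_keep_hd hN hb hc
  refine ⟨Subtype.val, Subtype.val, Subtype.val_injective, rfl, fun v => rfl, ?_, ?_, ?_⟩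
  · intro a
    refine ⟨a.2.1, a.2.2.1, rfl, rfl, ?_⟩
    rintro v ⟨p, ar, s, hsplit, hs, hv⟩ ⟨w, hw⟩
    have := a.2.2.2.2.2 p ar s hsplit hs
    rw [hv] at this
    rw [← hw] at this
    exact this w.2
  · intro v' hv'
    have hnk : ¬ N.Ustar.Keep v' := by
      intro hk
      exact hv' ⟨⟨v', hk⟩, rfl⟩
    obtain ⟨hne, hin, hout⟩ := not_keep_degs hnk
    refine ⟨hin, hout, ?_⟩
    rw [ustar_keep_iff hN hb] at hnk
    push_neg at hnk
    obtain ⟨xv, xr⟩ := v'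
    simp only at hnk ⊢
    show N.lab xv = none
    cases hcase : N.lab xv with
    | none => rfl
    | some x =>
      exfalso
      have hleaf : N.IsLeaf xv := (hN.1.2.2.2.1 xv).mp ⟨x, hcase⟩
      have := hnk.1
      rw [IsLeaf] at hleaf
      rw [hleaf] at this
      omega
  · intro a'
    obtain ⟨l, ⟨hl1, hl2⟩, hun⟩ := suppArc_exists_unique Hs Hp a'
    exact ⟨⟨l, hl1⟩, hl2, fun b hb2 => Subtype.ext (hun b.1 ⟨b.2, hb2⟩)⟩
end Dgr

/-- Every binary compressed tree-sibling phylogenetic network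
is stable, i.e. `F(U(N))` is isomorphic to `N`. -/
theorem tree_sibling_stable (X : Type) (N : Dgr X) (hN : N.IsPhyloNetwork)
    (hb : N.BinaryNet) (hc : N.Compressed) (hts : N.TreeSibling) :
    N.Stable := by
  refine ⟨N, ⟨hN.1, N.Ustar, Dgr.ustar_subdivision hN hb hc, Dgr.fstar N,
    Dgr.fstar_isFolding hN.1.1.2.2.2.2, ?_⟩, Dgr.Iso.refl N⟩
  intro u v
  constructor
  · intro h
    obtain ⟨uv, up⟩ := u
    obtain ⟨vv, vp⟩ := v
    have h' : uv = vv := h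
    subst h'
    exact Dgr.iso_pendant_of_eq_end N up vp
  · intro h
    obtain ⟨uv, up⟩ := u
    obtain ⟨vv, vp⟩ := v
    exact Dgr.end_eq_of_iso_pendant hN hb hc hts uv up vv vp h
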